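/- Let D, D_c : ℝ → ℂ be continuous with D_c nowhere zero on [a, b], and suppose D(ω)·conj(D_c(ω)) + conj(D(ω))·D_c(ω) > 0 for all ω ∈ [a, b]. Then D is nowhere zero on [a, b], and if additionally D and D_c are loops, they have equal winding numbers around the origin. -/

import Mathlib

open Complex

/-- `n` is a winding number of the loop `γ : [a,b] → ℂ \ {0}` around the origin. -/
def IsWindingNumber (a b : ℝ) (γ : ℝ → ℂ) (n : ℤ) : Prop :=
  ∃ θ : ℝ → ℝ, ContinuousOn θ (Set.Icc a b) ∧
    (∀ t ∈ Set.Icc a b, γ t = (‖γ t‖ : ℂ) * Complex.exp (Complex.I * θ t)) ∧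
    θ b - θ a = 2 * Real.pi * n

/-- Multiplying a loop by a slit-plane valued function with equal endpoints
preserves any winding number. -/
lemma winding_of_mul (a b : ℝ) (hab : a ≤ b) (γ δ g : ℝ → ℂ)
    (hg : ContinuousOn g (Set.Icc a b))
    (hgs : ∀ t ∈ Set.Icc a b, g t ∈ Complex.slitPlane)
    (hmul : ∀ t ∈ Set.Icc a b, γ t = g t * δ t)
    (hends : g a = g b) (n : ℤ) :
    IsWindingNumber a b δ n → IsWindingNumber a b γ n := by
  rintro ⟨θ, hθc, hθ, hθn⟩
  refine ⟨fun t => θ t + Complex.arg (g t), ?_, ?_, ?_⟩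
  · refine hθc.add ?_
    intro t ht
    exact (Complex.continuousAt_arg (hgs t ht)).comp_continuousWithinAt
      (hg.continuousWithinAt ht)
  · intro t ht
    have hgt := hgs t ht
    have hne : g t ≠ 0 := Complex.slitPlane_ne_zero hgt
    have h1 : (‖g t‖ : ℂ) * Complex.exp (Complex.arg (g t) * Complex.I) = g t :=
      Complex.norm_mul_exp_arg_mul_I (g t)
    rw [hmul t ht, norm_mul]
    push_cast
    calc g t * δ t
        = (↑‖g t‖ * Complex.exp (↑(Complex.arg (g t)) * Complex.I)) *
          (↑‖δ t‖ * Complex.exp (Complex.I * ↑(θ t))) := by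
          rw [h1, ← hθ t ht]
      _ = ↑‖g t‖ * ↑‖δ t‖ *
          Complex.exp (Complex.I * (↑(θ t) + ↑(Complex.arg (g t)))) := by
          rw [show Complex.I * ((θ t : ℂ) + (Complex.arg (g t) : ℂ))
              = ↑(Complex.arg (g t)) * Complex.I + Complex.I * ↑(θ t) from by ring,
            Complex.exp_add]
          ring
  · have : Complex.arg (g a) = Complex.arg (g b) := by rw [hends]
    rw [show θ b + (g b).arg - (θ a + (g a).arg) = (θ b - θ a) + ((g b).arg - (g a).arg) by ring,
      ← this, sub_self, add_zero, hθn]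

/-- The constraint `D·conj(Dc) + conj(D)·Dc > 0` forces `D` nowhere zero and,
for loops, equal winding numbers with `Dc`. -/
theorem denominator_winding (a b : ℝ) (hab : a ≤ b) (D Dc : ℝ → ℂ)
    (hD : ContinuousOn D (Set.Icc a b)) (hDc : ContinuousOn Dc (Set.Icc a b))
    (hDc0 : ∀ ω ∈ Set.Icc a b, Dc ω ≠ 0)
    (hpos : ∀ ω ∈ Set.Icc a b,
      0 < (D ω * (starRingEnd ℂ) (Dc ω) + (starRingEnd ℂ) (D ω) * Dc ω).re) :
    (∀ ω ∈ Set.Icc a b, D ω ≠ 0) ∧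
    (D a = D b → Dc a = Dc b →
      ∀ n : ℤ, IsWindingNumber a b D n ↔ IsWindingNumber a b Dc n) := by
  have hD0 : ∀ ω ∈ Set.Icc a b, D ω ≠ 0 := by
    intro ω hω h0
    have := hpos ω hω
    rw [h0] at this
    simp at this
  -- the ratio f = D / Dc has positive real part
  set f : ℝ → ℂ := fun t => D t / Dc t with hf
  have hfre : ∀ t ∈ Set.Icc a b, 0 < (f t).re := by
    intro t ht
    have hden : (0:ℝ) < Complex.normSq (Dc t) := by
      simpa [Complex.normSq_pos] using hDc0 t ht
    have : (f t).re = (D t * (starRingEnd ℂ) (Dc t)).re / Complex.normSq (Dc t) := by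
      simp only [hf, Complex.div_re, Complex.mul_re, Complex.conj_re, Complex.conj_im,
        ← add_div]
      ring
    rw [this]
    apply div_pos _ hden
    have h2 := hpos t ht
    have hre : (D t * (starRingEnd ℂ) (Dc t) + (starRingEnd ℂ) (D t) * Dc t).re
        = 2 * (D t * (starRingEnd ℂ) (Dc t)).re := by
      simp [Complex.add_re, Complex.mul_re, Complex.conj_re, Complex.conj_im]
      ring
    rw [hre] at h2
    linarith
  have hfne : ∀ t ∈ Set.Icc a b, f t ≠ 0 := by
    intro t ht h0
    have := hfre t ht
    rw [h0] at this; simp at this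
  have hfc : ContinuousOn f (Set.Icc a b) := hD.div hDc hDc0
  have hfs : ∀ t ∈ Set.Icc a b, f t ∈ Complex.slitPlane :=
    fun t ht => Or.inl (hfre t ht)
  refine ⟨hD0, fun hDe hDce n => ?_⟩
  have haI : a ∈ Set.Icc a b := ⟨le_refl a, hab⟩
  have hbI : b ∈ Set.Icc a b := ⟨hab, le_refl b⟩
  have hfends : f a = f b := by simp [hf, hDe, hDce]
  constructor
  · -- from D to Dc: Dc = (1/f) * D
    intro hwD
    refine winding_of_mul a b hab Dc D (fun t => (f t)⁻¹) (hfc.inv₀ hfne) ?_ ?_ ?_ n hwD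
    · intro t ht
      refine Or.inl ?_
      have := hfre t ht
      rw [Complex.inv_re]
      exact div_pos this (by simpa [Complex.normSq_pos] using hfne t ht)
    · intro t ht
      show Dc t = (f t)⁻¹ * D t
      rw [hf]
      simp only
      rw [inv_div, div_mul_eq_mul_div, mul_div_assoc, div_self (hD0 t ht), mul_one]
    · show (f a)⁻¹ = (f b)⁻¹
      rw [hfends]
  · -- from Dc to D: D = f * Dc
    intro hwDc
    refine winding_of_mul a b hab D Dc f hfc hfs ?_ hfends n hwDc
    intro t ht
    show D t = f t * Dc t
    rw [hf]
    exact (div_mul_cancel₀ _ (hDc0 t ht)).symm
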